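/- For m ∈ ℕ define c_m = Σ ⌊(j2 − j0)/3⌋·x1^{j1} x2^{j2}, the sum being over all (j0, j1, j2) ∈ ℕ³ with j0 + 3j1 + j2 = m and j2 ≤ j0 (so each coefficient ⌊(j2 − j0)/3⌋ is a nonpositive integer). Then in R[[t]] one has (Σ_{m=0}^∞ c_m t^m) · (1 − t)(1 − t³)(1 − t³·x1)(1 − t²·x2) = −t. -/

import Mathlib

open scoped BigOperators

noncomputable section StmtAux

abbrev Rp : Type := MvPolynomial (Fin 2) ℚ

def cf (m : ℕ) : Rp :=
  ∑ j ∈ (Finset.range (m + 1) ×ˢ Finset.range (m + 1) ×ˢ Finset.range (m + 1)).filter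
      (fun j => j.1 + 3 * j.2.1 + j.2.2 = m ∧ j.2.2 ≤ j.1),
    ((Int.fdiv ((j.2.2 : ℤ) - (j.1 : ℤ)) 3 : ℤ) : Rp) *
      MvPolynomial.X 0 ^ j.2.1 * MvPolynomial.X 1 ^ j.2.2

def df (n : ℕ) : Rp :=
  ∑ p ∈ (Finset.range (n + 1) ×ˢ Finset.range (n + 1)).filter
      (fun p => p.1 + p.2 = n ∧ p.2 ≤ p.1),
    ((Int.fdiv ((p.2 : ℤ) - (p.1 : ℤ)) 3 : ℤ) : Rp) * MvPolynomial.X 1 ^ p.2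

def gf (n : ℕ) : Rp := ((Int.fdiv (-(n : ℤ)) 3 : ℤ) : Rp)

lemma mulshift (f : ℕ → Rp) (a : Rp) (k : ℕ) :
    PowerSeries.mk f * (1 - PowerSeries.C (R := Rp) a * PowerSeries.X ^ k) =
      PowerSeries.mk (fun n => f n - a * (if k ≤ n then f (n - k) else 0)) := by
  refine PowerSeries.ext fun n => ?_
  rw [mul_sub, mul_one, map_sub,
    show PowerSeries.mk f * (PowerSeries.C (R := Rp) a * PowerSeries.X ^ k)
        = PowerSeries.C (R := Rp) a * (PowerSeries.mk f * PowerSeries.X ^ k) by ring,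
    PowerSeries.coeff_C_mul, PowerSeries.coeff_mul_X_pow', PowerSeries.coeff_mk,
    PowerSeries.coeff_mk, PowerSeries.coeff_mk]

lemma lemA (n : ℕ) :
    cf n = df n + (if 3 ≤ n then MvPolynomial.X 0 * cf (n - 3) else 0) := by
  rw [cf, ← Finset.sum_filter_add_sum_filter_not _ (fun j => j.2.1 = 0)]
  congr 1
  · rw [df]
    refine Finset.sum_nbij' (fun j => (j.1, j.2.2)) (fun p => (p.1, 0, p.2)) ?_ ?_ ?_ ?_ ?_
    · rintro ⟨a1, a2, a3⟩ ha
      simp only [Finset.mem_filter, Finset.mem_product, Finset.mem_range, and_true] at ha ⊢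
      omega
    · rintro ⟨a1, a2⟩ ha
      simp only [Finset.mem_filter, Finset.mem_product, Finset.mem_range, and_true] at ha ⊢
      omega
    · rintro ⟨a1, a2, a3⟩ ha
      simp only [Finset.mem_filter, Finset.mem_product, Finset.mem_range] at ha
      have h0 : a2 = 0 := ha.2
      simp [h0]
    · rintro ⟨a1, a2⟩ _; rfl
    · rintro ⟨a1, a2, a3⟩ ha
      simp only [Finset.mem_filter, Finset.mem_product, Finset.mem_range] at ha
      have h0 : a2 = 0 := ha.2
      simp [h0]
  · by_cases h3 : 3 ≤ n
    · rw [if_pos h3, cf, Finset.mul_sum]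
      refine Finset.sum_nbij' (fun j => (j.1, j.2.1 - 1, j.2.2))
        (fun j => (j.1, j.2.1 + 1, j.2.2)) ?_ ?_ ?_ ?_ ?_
      · rintro ⟨a1, a2, a3⟩ ha
        simp only [Finset.mem_filter, Finset.mem_product, Finset.mem_range, and_true] at ha ⊢
        omega
      · rintro ⟨a1, a2, a3⟩ ha
        simp only [Finset.mem_filter, Finset.mem_product, Finset.mem_range, and_true] at ha ⊢
        omega
      · rintro ⟨a1, a2, a3⟩ ha
        simp only [Finset.mem_filter, Finset.mem_product, Finset.mem_range] at ha
        have : a2 ≠ 0 := ha.2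
        simp only [Prod.mk.injEq]
        exact ⟨trivial, by omega, trivial⟩
      · rintro ⟨a1, a2, a3⟩ _; rfl
      · rintro ⟨a1, a2, a3⟩ ha
        simp only [Finset.mem_filter, Finset.mem_product, Finset.mem_range] at ha
        have h0 : a2 ≠ 0 := ha.2
        obtain ⟨k, hk⟩ : ∃ k, a2 = k + 1 := ⟨a2 - 1, by omega⟩
        subst hk
        simp only [Nat.add_sub_cancel]
        ring
    · rw [if_neg h3]
      refine Finset.sum_eq_zero fun j hj => ?_
      simp only [Finset.mem_filter, Finset.mem_product, Finset.mem_range] at hj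
      omega

lemma lemB (n : ℕ) :
    df n = gf n + (if 2 ≤ n then MvPolynomial.X 1 * df (n - 2) else 0) := by
  rw [df, ← Finset.sum_filter_add_sum_filter_not _ (fun p => p.2 = 0)]
  congr 1
  · have hset : ((Finset.range (n + 1) ×ˢ Finset.range (n + 1)).filter
        (fun p => p.1 + p.2 = n ∧ p.2 ≤ p.1)).filter (fun p => p.2 = 0) = {(n, 0)} := by
      ext ⟨p1, p2⟩
      simp only [Finset.mem_filter, Finset.mem_product, Finset.mem_range,
        Finset.mem_singleton, Prod.mk.injEq]
      omega
    rw [hset, Finset.sum_singleton, gf]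
    push_cast
    simp
  · by_cases h2 : 2 ≤ n
    · rw [if_pos h2, df, Finset.mul_sum]
      refine Finset.sum_nbij' (fun p => (p.1 - 1, p.2 - 1)) (fun p => (p.1 + 1, p.2 + 1))
        ?_ ?_ ?_ ?_ ?_
      · rintro ⟨a1, a2⟩ ha
        simp only [Finset.mem_filter, Finset.mem_product, Finset.mem_range, and_true] at ha ⊢
        omega
      · rintro ⟨a1, a2⟩ ha
        simp only [Finset.mem_filter, Finset.mem_product, Finset.mem_range, and_true] at ha ⊢
        omega
      · rintro ⟨a1, a2⟩ ha
        simp only [Finset.mem_filter, Finset.mem_product, Finset.mem_range] at ha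
        simp only [Prod.mk.injEq]
        omega
      · rintro ⟨a1, a2⟩ _; rfl
      · rintro ⟨a1, a2⟩ ha
        simp only [Finset.mem_filter, Finset.mem_product, Finset.mem_range] at ha
        have h0 : a2 ≠ 0 := ha.2
        have h1 : a2 ≤ a1 := ha.1.2.2
        obtain ⟨k, hk⟩ : ∃ k, a2 = k + 1 := ⟨a2 - 1, by omega⟩
        obtain ⟨l, hl⟩ : ∃ l, a1 = l + 1 := ⟨a1 - 1, by omega⟩
        subst hk; subst hl
        simp only [Nat.add_sub_cancel]
        have harg : ((k : ℤ) + 1) - ((l : ℤ) + 1) = (k : ℤ) - l := by ring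
        push_cast
        rw [harg]
        ring
    · rw [if_neg h2]
      refine Finset.sum_eq_zero fun j hj => ?_
      simp only [Finset.mem_filter, Finset.mem_product, Finset.mem_range] at hj
      omega

lemma lemC :
    PowerSeries.mk gf * ((1 - PowerSeries.X) * (1 - PowerSeries.X ^ 3)) =
      (-PowerSeries.X : PowerSeries Rp) := by
  rw [← mul_assoc,
    show (1 - PowerSeries.X : PowerSeries Rp) = 1 - PowerSeries.C (R := Rp) 1 * PowerSeries.X ^ 1 by
      simp,
    mulshift,
    show (1 - PowerSeries.X ^ 3 : PowerSeries Rp)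
        = 1 - PowerSeries.C (R := Rp) 1 * PowerSeries.X ^ 3 by simp,
    mulshift]
  refine PowerSeries.ext fun n => ?_
  rw [PowerSeries.coeff_mk, map_neg, PowerSeries.coeff_X]
  have key : ∀ m : ℕ, gf m = (((-(m : ℤ)) / 3 : ℤ) : Rp) := by
    intro m
    rw [gf, Int.fdiv_eq_ediv_of_nonneg _ (by norm_num)]
  simp only [one_mul, key]
  match n with
  | 0 => norm_num
  | 1 => norm_num
  | 2 => norm_num
  | 3 => norm_num
  | (m + 4) =>
    have h1 : (1:ℕ) ≤ m + 4 := by omega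
    have h3 : (3:ℕ) ≤ m + 4 := by omega
    have h1' : (1:ℕ) ≤ m + 4 - 3 := by omega
    rw [if_pos h1, if_pos h3, if_pos h1', if_neg (by omega : ¬ m + 4 = 1), neg_zero]
    have e3 : m + 4 - 3 - 1 = m := by omega
    have e2 : m + 4 - 3 = m + 1 := by omega
    have e1 : m + 4 - 1 = m + 3 := by omega
    rw [e3, e2, e1]
    have hz : (-(↑(m+4) : ℤ)) / 3 - (-(↑(m+3) : ℤ)) / 3
        - ((-(↑(m+1) : ℤ)) / 3 - (-(↑m : ℤ)) / 3) = 0 := by omega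
    exact_mod_cast congrArg (fun z : ℤ => (z : Rp)) hz

end StmtAux

theorem stmt_7 :
    (PowerSeries.mk (fun m : ℕ =>
      ∑ j ∈ (Finset.range (m + 1) ×ˢ Finset.range (m + 1) ×ˢ Finset.range (m + 1)).filter
          (fun j => j.1 + 3 * j.2.1 + j.2.2 = m ∧ j.2.2 ≤ j.1),
        ((Int.fdiv ((j.2.2 : ℤ) - (j.1 : ℤ)) 3 : ℤ) : MvPolynomial (Fin 2) ℚ) *
          MvPolynomial.X 0 ^ j.2.1 * MvPolynomial.X 1 ^ j.2.2)) *
      ((1 - PowerSeries.X) * (1 - PowerSeries.X ^ 3) *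
        (1 - PowerSeries.C (R := MvPolynomial (Fin 2) ℚ) (MvPolynomial.X 0) * PowerSeries.X ^ 3) *
        (1 - PowerSeries.C (R := MvPolynomial (Fin 2) ℚ) (MvPolynomial.X 1) * PowerSeries.X ^ 2)) =
      -PowerSeries.X := by
  have h1 : PowerSeries.mk cf
      * (1 - PowerSeries.C (R := Rp) (MvPolynomial.X 0) * PowerSeries.X ^ 3) = PowerSeries.mk df := by
    rw [mulshift]
    refine PowerSeries.ext fun n => ?_
    rw [PowerSeries.coeff_mk, PowerSeries.coeff_mk, lemA n]
    split_ifs <;> ring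
  have h2 : PowerSeries.mk df
      * (1 - PowerSeries.C (R := Rp) (MvPolynomial.X 1) * PowerSeries.X ^ 2) = PowerSeries.mk gf := by
    rw [mulshift]
    refine PowerSeries.ext fun n => ?_
    rw [PowerSeries.coeff_mk, PowerSeries.coeff_mk, lemB n]
    split_ifs <;> ring
  calc (PowerSeries.mk cf) *
      ((1 - PowerSeries.X) * (1 - PowerSeries.X ^ 3) *
        (1 - PowerSeries.C (R := Rp) (MvPolynomial.X 0) * PowerSeries.X ^ 3) *
        (1 - PowerSeries.C (R := Rp) (MvPolynomial.X 1) * PowerSeries.X ^ 2))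
      = ((PowerSeries.mk cf * (1 - PowerSeries.C (R := Rp) (MvPolynomial.X 0) * PowerSeries.X ^ 3))
          * (1 - PowerSeries.C (R := Rp) (MvPolynomial.X 1) * PowerSeries.X ^ 2))
        * ((1 - PowerSeries.X) * (1 - PowerSeries.X ^ 3)) := by ring
    _ = -PowerSeries.X := by rw [h1, h2, lemC]
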